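/- Let n ≥ 2 and let α₁ ≥ α₂ ≥ … ≥ α_{n−1} ≥ αₙ = 0 be integers. Then the maximum, over all integer vectors γ = (γ₁,…,γ_{n−1}) with γ₁ ≥ γ₂ ≥ … ≥ γ_{n−1} = 0, of the number of integers c such that α_{i+1} ≤ γ_i + c ≤ α_i for all 1 ≤ i ≤ n−1, equals min_{1≤i≤n−1}(α_i − α_{i+1}) + 1. -/
import Mathlib

lemma natCard_Icc_int (a b : ℤ) :
    Nat.card (Set.Icc a b) = (b + 1 - a).toNat := by
  rw [← Finset.coe_Icc, Nat.card_coe_set_eq, Set.ncard_coe_finset, Int.card_Icc]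

/-- Corollary 2 of the paper: the largest branching multiplicity
`br_α(γ) = #{c ∈ ℤ : α_{i+1} ≤ γ_i + c ≤ α_i ∀i}` over dominant `γ` with `γ_{n-1} = 0`
equals `1` plus the smallest Dynkin component `min_i (α_i - α_{i+1})` (here `n = M + 2`). -/
theorem stmt_10 (M : ℕ) (α : Fin (M + 2) → ℤ) (hα : Antitone α)
    (h0 : α (Fin.last (M + 1)) = 0) :
    IsGreatest {k : ℤ | ∃ γ : Fin (M + 1) → ℤ, Antitone γ ∧ γ (Fin.last M) = 0 ∧
        k = Nat.card {c : ℤ // ∀ i : Fin (M + 1),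
              α i.succ ≤ γ i + c ∧ γ i + c ≤ α i.castSucc}}
      ((Finset.univ.inf' Finset.univ_nonempty
          fun i : Fin (M + 1) => α i.castSucc - α i.succ) + 1) := by
  set m : ℤ := Finset.univ.inf' Finset.univ_nonempty
      fun i : Fin (M + 1) => α i.castSucc - α i.succ with hm
  have hm0 : 0 ≤ m := by
    apply Finset.le_inf'
    intro i _
    have := hα (Fin.castSucc_le_succ i)
    omega
  constructor
  · -- membership: witness γ i = α i.succ
    refine ⟨fun i => α i.succ, ?_, ?_, ?_⟩
    · intro i j hij
      exact hα (Fin.succ_le_succ_iff.mpr hij)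
    · show α (Fin.last M).succ = 0
      rw [Fin.succ_last, h0]
    · have hset : {c : ℤ | ∀ i : Fin (M + 1),
          α i.succ ≤ α i.succ + c ∧ α i.succ + c ≤ α i.castSucc} = Set.Icc 0 m := by
        ext c
        simp only [Set.mem_setOf_eq, Set.mem_Icc, hm, Finset.le_inf'_iff, Finset.mem_univ,
          forall_true_left]
        constructor
        · intro h
          refine ⟨by have := (h 0).1; omega, fun i => by have := h i; omega⟩
        · intro ⟨h1, h2⟩ i
          have := h2 i
          omega
      have : Nat.card {c : ℤ // ∀ i : Fin (M + 1),
          α i.succ ≤ α i.succ + c ∧ α i.succ + c ≤ α i.castSucc} = Nat.card (Set.Icc 0 m) := by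
        congr 1
        exact congrArg _ hset
      rw [this, natCard_Icc_int]
      omega
  · -- upper bound
    rintro k ⟨γ, hγ, hγ0, rfl⟩
    obtain ⟨j, -, hj⟩ := Finset.exists_mem_eq_inf' (Finset.univ_nonempty (α := Fin (M + 1)))
      fun i : Fin (M + 1) => α i.castSucc - α i.succ
    have hsub : {c : ℤ | ∀ i : Fin (M + 1),
        α i.succ ≤ γ i + c ∧ γ i + c ≤ α i.castSucc} ⊆
        Set.Icc (α j.succ - γ j) (α j.castSucc - γ j) := by
      intro c hc
      have := hc j
      simp only [Set.mem_Icc]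
      omega
    have hcard := Nat.card_mono (Set.finite_Icc _ _) hsub
    rw [natCard_Icc_int] at hcard
    have : Nat.card {c : ℤ // ∀ i : Fin (M + 1),
        α i.succ ≤ γ i + c ∧ γ i + c ≤ α i.castSucc} ≤
        (α j.castSucc - γ j + 1 - (α j.succ - γ j)).toNat := hcard
    have hmj : m = α j.castSucc - α j.succ := hj
    omega
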